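/- Let M₀ be a Puiseux monoid satisfying the ACCP with 1 ∈ M₀ and 1 not an atom of M₀, and let N be a numerical monoid containing a prime p with p > max 𝒜(N) and v_p(q) ≥ 0 for all nonzero q ∈ M₀. Then in M = M₀ + p^{-1}N, the length set of 1 satisfies L_M(1) = L_{M₀}(1) ∪ L_N(p). -/

import Mathlib

/-- An atom of the additive submonoid `M`: a nonzero element of `M` that is not the
sum of two nonzero elements of `M`. -/
def IsAtomOf {α : Type*} [AddCommMonoid α] (M : AddSubmonoid α) (a : α) : Prop :=
  a ∈ M ∧ a ≠ 0 ∧ ∀ b ∈ M, ∀ c ∈ M, b + c = a → b = 0 ∨ c = 0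

/-- The length set of `q` in `M`: the set of all `ℓ` such that `q` is a sum of `ℓ`
atoms of `M` (counted with multiplicity). -/
def LengthSet {α : Type*} [AddCommMonoid α] (M : AddSubmonoid α) (q : α) : Set ℕ :=
  {ℓ | ∃ s : Multiset α, Multiset.card s = ℓ ∧ (∀ a ∈ s, IsAtomOf M a) ∧ s.sum = q}

/-- The additive submonoid `M` satisfies the ACCP: every ascending chain of principal
ideals `f n + M ⊆ f (n+1) + M` stabilizes. -/
def AddACCP {α : Type*} [AddCommMonoid α] (M : AddSubmonoid α) : Prop :=
  ∀ f : ℕ → α, (∀ n, f n ∈ M) → (∀ n, ∃ c ∈ M, f n = f (n + 1) + c) →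
    ∃ N, ∀ n ≥ N, ∃ c ∈ M, f n = f N + c

/-- The Puiseux monoid generated by the reciprocals of the elements of `P`. -/
def MP (P : Set ℕ) : AddSubmonoid ℚ :=
  AddSubmonoid.closure {q : ℚ | ∃ p ∈ P, q = 1 / (p : ℚ)}

/-- The additive monoid homomorphism `ℕ →+ ℚ` sending `n` to `n / p`. -/
def scaleRecip (p : ℕ) : ℕ →+ ℚ where
  toFun n := (n : ℚ) / (p : ℚ)
  map_zero' := by simp
  map_add' := fun a b => by push_cast; ring

/-- Lift a multiset pointwise along an existence statement. -/
lemma multiset_lift {P : ℕ → Prop} (f : ℕ → ℚ) (s : Multiset ℚ)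
    (h : ∀ x ∈ s, ∃ b : ℕ, P b ∧ x = f b) :
    ∃ t : Multiset ℕ, t.map f = s ∧ ∀ b ∈ t, P b := by
  induction s using Multiset.induction with
  | empty => exact ⟨0, by simp, by simp⟩
  | cons x s ih =>
    obtain ⟨b, hPb, hxb⟩ := h x (Multiset.mem_cons_self x s)
    obtain ⟨t, ht, hPt⟩ := ih (fun y hy => h y (Multiset.mem_cons_of_mem hy))
    refine ⟨b ::ₘ t, by simp [ht, hxb], ?_⟩
    intro c hc
    rcases Multiset.mem_cons.1 hc with h' | h'
    · exact h' ▸ hPb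
    · exact hPt c h'

/-- Sum of a multiset mapped by division. -/
lemma map_div_sum (p : ℕ) (t : Multiset ℕ) :
    (t.map (fun b : ℕ => (b : ℚ) / p)).sum = ((t.sum : ℕ) : ℚ) / p := by
  induction t using Multiset.induction with
  | empty => simp
  | cons c t ih =>
    rw [Multiset.map_cons, Multiset.sum_cons, ih, Multiset.sum_cons]
    push_cast
    ring

theorem stmt14 (M₀ : AddSubmonoid ℚ) (hpos : ∀ x ∈ M₀, 0 ≤ x)
    (hacc : AddACCP M₀) (h1 : (1 : ℚ) ∈ M₀) (h1na : ¬ IsAtomOf M₀ 1)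
    (N : AddSubmonoid ℕ) (hnum : {n : ℕ | n ∉ N}.Finite)
    (p : ℕ) (hp : p.Prime) (hpN : p ∈ N)
    (hmax : ∀ a : ℕ, IsAtomOf N a → a < p)
    (hval : ∀ q : ℚ, q ∈ M₀ → q ≠ 0 → ¬ (p ∣ q.den))
    (M : AddSubmonoid ℚ)
    (hM : (M : Set ℚ) =
      {x | ∃ a ∈ M₀, ∃ b ∈ AddSubmonoid.map (scaleRecip p) N, x = a + b}) :
    LengthSet M 1 = LengthSet M₀ 1 ∪ LengthSet N p := by
  classical
  have hp0 : (p : ℚ) ≠ 0 := Nat.cast_ne_zero.2 hp.pos.ne'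
  -- membership characterization of M
  have hMmem : ∀ x : ℚ, x ∈ M ↔ ∃ a ∈ M₀, ∃ b ∈ N, x = a + (b : ℚ) / p := by
    intro x
    constructor
    · intro hx
      have : x ∈ (M : Set ℚ) := hx
      rw [hM] at this
      obtain ⟨a, ha, b, hb, hx⟩ := this
      obtain ⟨n, hn, rfl⟩ := hb
      exact ⟨a, ha, n, hn, hx⟩
    · rintro ⟨a, ha, b, hb, rfl⟩
      have : a + (b : ℚ) / p ∈ (M : Set ℚ) := by
        rw [hM]
        exact ⟨a, ha, (b : ℚ) / p, ⟨b, hb, rfl⟩, rfl⟩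
      exact this
  have hM₀sub : ∀ a ∈ M₀, a ∈ M := by
    intro a ha
    rw [hMmem]
    exact ⟨a, ha, 0, zero_mem N, by simp⟩
  have hNsub : ∀ b ∈ N, (b : ℚ) / p ∈ M := by
    intro b hb
    rw [hMmem]
    exact ⟨0, zero_mem M₀, b, hb, by simp⟩
  -- p does not divide denominators of elements of M₀
  have hden : ∀ a ∈ M₀, ¬ (p : ℤ) ∣ (a.den : ℤ) := by
    intro a ha hdvd
    rcases eq_or_ne a 0 with rfl | h0
    · have hden0 : ((0:ℚ).den : ℤ) = 1 := by norm_num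
      rw [hden0] at hdvd
      exact hp.one_lt.ne' (by exact_mod_cast Int.eq_one_of_dvd_one (by positivity) hdvd)
    · exact hval a ha h0 (Int.ofNat_dvd.1 hdvd)
  -- the key congruence lemma
  have hcong : ∀ a ∈ M₀, ∀ a' ∈ M₀, ∀ b b' : ℕ,
      a + (b : ℚ) / p = a' + (b' : ℚ) / p →
      ∃ z : ℤ, (b' : ℤ) - (b : ℤ) = p * z ∧ a - a' = (z : ℚ) := by
    intro a ha a' ha' b b' h
    have hd : a - a' = (((b' : ℤ) - (b : ℤ) : ℤ) : ℚ) / ((p : ℤ) : ℚ) := by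
      push_cast
      rw [eq_div_iff hp0]
      field_simp at h
      linarith [h]
    -- denominator of a - a' divides p
    have hdvd1 : ((a - a').den : ℤ) ∣ (p : ℤ) := by
      rw [hd, ← Rat.divInt_eq_div]
      exact Rat.den_dvd _ _
    -- p does not divide the denominator of a - a'
    have hdvd2 : ¬ (p : ℤ) ∣ ((a - a').den : ℤ) := by
      intro hdvd
      have h3 : (a - a').den ∣ a.den * a'.den := by
        have := Rat.add_den_dvd a (-a')
        rwa [← sub_eq_add_neg, Rat.den_neg_eq_den] at this
      have h4 : (p : ℤ) ∣ ((a.den : ℤ) * (a'.den : ℤ)) := by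
        exact hdvd.trans (by exact_mod_cast Int.ofNat_dvd.2 h3)
      rcases (Int.Prime.dvd_mul' (by exact_mod_cast hp) h4) with h5 | h5
      · exact hden a ha h5
      · exact hden a' ha' h5
    have hden1 : (a - a').den = 1 := by
      have hdp : (a - a').den ∣ p := by exact_mod_cast hdvd1
      rcases (Nat.Prime.eq_one_or_self_of_dvd hp (a - a').den hdp) with h5 | h5
      · exact h5
      · exfalso; apply hdvd2; rw [h5]
    obtain hz := (Rat.den_eq_one_iff _).1 hden1
    refine ⟨(a - a').num, ?_, hz.symm⟩
    have : (((b' : ℤ) - (b : ℤ) : ℤ) : ℚ) = (p : ℚ) * ((a - a').num : ℚ) := by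
      rw [hz, hd]
      push_cast
      field_simp
    exact_mod_cast this
  -- atoms of M₀ are atoms of M
  have hnatmem : ∀ k : ℕ, (k : ℚ) ∈ M₀ := by
    intro k
    simpa using AddSubmonoid.nsmul_mem M₀ h1 k
  have atomM₀ : ∀ c : ℚ, IsAtomOf M₀ c → IsAtomOf M c := by
    rintro c ⟨hcM, hc0, hcatom⟩
    refine ⟨hM₀sub c hcM, hc0, ?_⟩
    intro x hx y hy hxy
    obtain ⟨a₁, ha₁, b₁, hb₁, rfl⟩ := (hMmem x).1 hx
    obtain ⟨a₂, ha₂, b₂, hb₂, rfl⟩ := (hMmem y).1 hy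
    have heq : (a₁ + a₂) + ((b₁ + b₂ : ℕ) : ℚ) / p = c + ((0 : ℕ) : ℚ) / p := by
      push_cast
      push_cast at hxy
      ring_nf
      ring_nf at hxy
      linarith [hxy]
    obtain ⟨z, hz1, hz2⟩ := hcong _ (add_mem ha₁ ha₂) _ hcM _ _ heq
    -- (0:ℤ) - (b₁+b₂) = p z, (a₁+a₂) - c = z
    have hzle : z ≤ 0 := by
      by_contra h
      push_neg at h
      have hmul : (p:ℤ) * 1 ≤ (p:ℤ) * z :=
        mul_le_mul_of_nonneg_left (by omega) (by positivity)
      have h2 : (0:ℤ) ≤ ((b₁ + b₂ : ℕ) : ℤ) := by positivity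
      have h3 : (0:ℤ) < (p:ℤ) := by exact_mod_cast hp.pos
      push_cast at hz1 h2
      linarith
    set n : ℕ := (-z).toNat with hn
    have hzn : (n : ℤ) = -z := Int.toNat_of_nonneg (by omega)
    have hbn : b₁ + b₂ = p * n := by
      have : ((b₁ + b₂ : ℕ) : ℤ) = (p : ℤ) * (n : ℤ) := by
        rw [hzn]; push_cast at hz1 ⊢; linarith
      exact_mod_cast this
    have hcn : c = (a₁ + a₂) + (n : ℚ) := by
      have : ((n : ℤ) : ℚ) = -(z : ℚ) := by exact_mod_cast congrArg Int.cast hzn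
      push_cast at this ⊢
      linarith [hz2]
    rcases Nat.eq_zero_or_pos n with hn0 | hnpos
    · -- n = 0 : b₁ = b₂ = 0, reduce to M₀
      rw [hn0, Nat.mul_zero] at hbn
      have : b₁ = 0 ∧ b₂ = 0 := by omega
      obtain ⟨rfl, rfl⟩ := this
      simp only [Nat.cast_zero, zero_div, add_zero] at hxy ⊢
      exact hcatom a₁ ha₁ a₂ ha₂ hxy
    · -- n ≥ 1 : c = (a₁+a₂) + n with both in M₀
      have := hcatom (a₁ + a₂) (add_mem ha₁ ha₂) (n : ℚ) (hnatmem n) hcn.symm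
      rcases this with h5 | h5
      · -- a₁ + a₂ = 0, c = n
        have hc : c = (n : ℚ) := by rw [hcn, h5, zero_add]
        rcases Nat.lt_or_ge n 2 with hn2 | hn2
        · -- n = 1, c = 1, contradiction with h1na
          have hn1 : n = 1 := by omega
          have hc1 : c = 1 := by rw [hc, hn1]; norm_num
          subst hc1
          exact absurd ⟨hcM, hc0, hcatom⟩ h1na
        · -- n ≥ 2 : c = 1 + (n-1), contradiction with atom
          have hd : c = 1 + ((n - 1 : ℕ) : ℚ) := by
            rw [hc]
            have : (n : ℚ) = 1 + ((n - 1 : ℕ) : ℚ) := by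
              push_cast [Nat.cast_sub (by omega : 1 ≤ n)]
              ring
            exact this
          rcases hcatom 1 h1 _ (hnatmem (n - 1)) hd.symm with h6 | h6
          · norm_num at h6
          · have h7 : n - 1 = 0 := by exact_mod_cast h6
            omega
      · -- (n : ℚ) = 0 contradiction
        exfalso
        have : (n : ℚ) ≠ 0 := Nat.cast_ne_zero.2 (by omega)
        exact this h5
  -- atoms of N (over p) are atoms of M
  have atomN : ∀ b : ℕ, IsAtomOf N b → IsAtomOf M ((b : ℚ) / p) := by
    rintro b ⟨hbN, hb0, hbatom⟩
    have hbp : b < p := hmax b ⟨hbN, hb0, hbatom⟩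
    refine ⟨hNsub b hbN, ?_, ?_⟩
    · intro h
      apply hb0
      field_simp at h
      exact_mod_cast h
    intro x hx y hy hxy
    obtain ⟨a₁, ha₁, b₁, hb₁, rfl⟩ := (hMmem x).1 hx
    obtain ⟨a₂, ha₂, b₂, hb₂, rfl⟩ := (hMmem y).1 hy
    have heq : (a₁ + a₂) + ((b₁ + b₂ : ℕ) : ℚ) / p = 0 + ((b : ℕ) : ℚ) / p := by
      push_cast at hxy ⊢
      ring_nf
      ring_nf at hxy
      linarith [hxy]
    obtain ⟨z, hz1, hz2⟩ := hcong _ (add_mem ha₁ ha₂) _ (zero_mem M₀) _ _ heq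
    -- b - (b₁+b₂) = p z, (a₁+a₂) - 0 = z
    have hzge : (0 : ℤ) ≤ z := by
      have := hpos _ (add_mem ha₁ ha₂)
      have hq : (0 : ℚ) ≤ (z : ℚ) := by rw [← hz2]; linarith
      exact_mod_cast hq
    have hzle : z ≤ 0 := by
      by_contra h
      push_neg at h
      have hmul : (p:ℤ) * 1 ≤ (p:ℤ) * z :=
        mul_le_mul_of_nonneg_left (by omega) (by positivity)
      have h2 : (0:ℤ) ≤ ((b₁ + b₂ : ℕ) : ℤ) := by positivity
      have h3 : (b : ℤ) < (p:ℤ) := by exact_mod_cast hbp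
      have h4 : (0:ℤ) < (p:ℤ) := by exact_mod_cast hp.pos
      push_cast at hz1 h2
      linarith
    have hz0 : z = 0 := le_antisymm hzle hzge
    subst hz0
    have ha12 : a₁ + a₂ = 0 := by
      have := hz2; push_cast at this; linarith
    have ha1 : a₁ = 0 := le_antisymm (by linarith [hpos a₂ ha₂]) (hpos a₁ ha₁)
    have ha2 : a₂ = 0 := by linarith
    have hbb : b₁ + b₂ = b := by
      have : ((b:ℤ)) = ((b₁ + b₂ : ℕ) : ℤ) := by push_cast at hz1 ⊢; omega
      exact_mod_cast this.symm
    rcases hbatom b₁ hb₁ b₂ hb₂ hbb with h5 | h5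
    · left; rw [ha1, h5]; simp
    · right; rw [ha2, h5]; simp
  -- characterization of atoms of M
  have atomMchar : ∀ x : ℚ, IsAtomOf M x →
      IsAtomOf M₀ x ∨ ∃ b : ℕ, IsAtomOf N b ∧ x = (b : ℚ) / p := by
    rintro x ⟨hxM, hx0, hxatom⟩
    obtain ⟨a, ha, b, hb, rfl⟩ := (hMmem x).1 hxM
    rcases hxatom a (hM₀sub a ha) ((b : ℚ) / p) (hNsub b hb) rfl with h5 | h5
    · -- a = 0, x = b/p
      right
      have hb0 : b ≠ 0 := by
        intro h; subst h; simp [h5] at hx0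
      refine ⟨b, ⟨hb, hb0, ?_⟩, by rw [h5, zero_add]⟩
      intro b₁ hb₁ b₂ hb₂ hbb
      have : (b₁ : ℚ) / p + (b₂ : ℚ) / p = a + (b : ℚ) / p := by
        rw [h5, zero_add, ← hbb]
        push_cast
        ring
      rcases hxatom _ (hNsub b₁ hb₁) _ (hNsub b₂ hb₂) this with h6 | h6
      · left
        field_simp at h6
        exact_mod_cast h6
      · right
        field_simp at h6
        exact_mod_cast h6
    · -- b/p = 0, x = a ∈ M₀
      left
      have hb0 : (b : ℚ) / p = 0 := h5
      rw [hb0, add_zero] at hx0 ⊢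
      refine ⟨ha, hx0, ?_⟩
      intro u hu v hv huv
      exact hxatom u (hM₀sub u hu) v (hM₀sub v hv) (by rw [huv, hb0, add_zero])
  -- main proof
  ext ℓ
  simp only [Set.mem_union]
  constructor
  · rintro ⟨s, hcard, hatoms, hsum⟩
    -- split s into M₀-atoms and the rest
    set s₁ := s.filter (fun x => x ∈ M₀) with hs₁
    set s₂ := s.filter (fun x => ¬ x ∈ M₀) with hs₂
    have hsplit : s₁ + s₂ = s := Multiset.filter_add_not _ s
    have hs₁atoms : ∀ x ∈ s₁, IsAtomOf M₀ x := by
      intro x hx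
      have hxs : x ∈ s := Multiset.mem_of_mem_filter hx
      have hxM₀ : x ∈ M₀ := (Multiset.mem_filter.1 hx).2
      obtain ⟨hxM, hx0, hxatom⟩ := hatoms x hxs
      refine ⟨hxM₀, hx0, ?_⟩
      intro u hu v hv huv
      exact hxatom u (hM₀sub u hu) v (hM₀sub v hv) huv
    have hs₂atoms : ∀ x ∈ s₂, ∃ b : ℕ, IsAtomOf N b ∧ x = (b : ℚ) / p := by
      intro x hx
      have hxs : x ∈ s := Multiset.mem_of_mem_filter hx
      have hxnM₀ : ¬ x ∈ M₀ := (Multiset.mem_filter.1 hx).2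
      rcases atomMchar x (hatoms x hxs) with h5 | h5
      · exact absurd h5.1 hxnM₀
      · exact h5
    obtain ⟨t, htmap, htatoms⟩ := multiset_lift (fun b => (b : ℚ) / p) s₂ hs₂atoms
    -- sums
    have hsum₂ : s₂.sum = ((t.sum : ℕ) : ℚ) / p := by
      rw [← htmap, map_div_sum]
    have hsumsplit : s₁.sum + ((t.sum : ℕ) : ℚ) / p = 1 := by
      rw [← hsum₂, ← hsum, ← hsplit, Multiset.sum_add]
    have hs₁M₀ : s₁.sum ∈ M₀ :=
      AddSubmonoid.multiset_sum_mem M₀ s₁ (fun x hx => (hs₁atoms x hx).1)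
    have htN : t.sum ∈ N := by
      refine AddSubmonoid.multiset_sum_mem N t (fun b hb => (htatoms b hb).1)
    -- congruence: s₁.sum + t.sum/p = 1 + 0/p
    have heq : s₁.sum + ((t.sum : ℕ) : ℚ) / p = 1 + ((0 : ℕ) : ℚ) / p := by
      rw [hsumsplit]; simp
    obtain ⟨z, hz1, hz2⟩ := hcong _ hs₁M₀ _ h1 _ _ heq
    -- 0 - t.sum = p z ; s₁.sum - 1 = z
    have hzle : z ≤ 0 := by
      by_contra h
      push_neg at h
      have hmul : (p:ℤ) * 1 ≤ (p:ℤ) * z :=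
        mul_le_mul_of_nonneg_left (by omega) (by positivity)
      have h2 : (0:ℤ) ≤ ((t.sum : ℕ) : ℤ) := by positivity
      have h3 : (0:ℤ) < (p:ℤ) := by exact_mod_cast hp.pos
      push_cast at hz1 h2
      linarith
    have hzge : (-1 : ℤ) ≤ z := by
      have h2 : (0:ℚ) ≤ s₁.sum := hpos _ hs₁M₀
      have : (-1 : ℚ) ≤ (z : ℚ) := by rw [← hz2]; linarith
      exact_mod_cast this
    interval_cases z
    · -- z = -1 : s₁ empty, t sums to p
      have hsum1 : s₁.sum = 0 := by
        have : s₁.sum - 1 = -1 := by rw [hz2]; norm_num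
        linarith
      have hs₁empty : s₁ = 0 := by
        by_contra h
        obtain ⟨x, hx⟩ := Multiset.exists_mem_of_ne_zero h
        obtain ⟨hxM₀, hx0, _⟩ := hs₁atoms x hx
        have hxpos : 0 < x := lt_of_le_of_ne (hpos x hxM₀) (Ne.symm hx0)
        have hrest : 0 ≤ (s₁.erase x).sum :=
          Multiset.sum_nonneg (fun y hy => hpos y ((hs₁atoms y (Multiset.mem_of_mem_erase hy)).1))
        have : s₁.sum = x + (s₁.erase x).sum := by
          rw [← Multiset.sum_cons, Multiset.cons_erase hx]
        linarith
      have htp : t.sum = p := by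
        have : ((t.sum : ℕ) : ℤ) = (p : ℤ) := by push_cast at hz1 ⊢; omega
        exact_mod_cast this
      right
      refine ⟨t, ?_, htatoms, htp⟩
      rw [← hcard, ← hsplit, hs₁empty]
      simp [← htmap]
    · -- z = 0 : t empty, s = s₁
      have htsum0 : t.sum = 0 := by
        have : ((t.sum : ℕ) : ℤ) = 0 := by push_cast at hz1 ⊢; omega
        exact_mod_cast this
      have htempty : t = 0 := by
        by_contra h
        obtain ⟨b, hb⟩ := Multiset.exists_mem_of_ne_zero h
        have hb0 : b ≠ 0 := (htatoms b hb).2.1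
        have : b ≤ t.sum := Multiset.le_sum_of_mem hb
        omega
      have hs₂empty : s₂ = 0 := by
        rw [← htmap, htempty]; simp
      left
      refine ⟨s₁, ?_, hs₁atoms, ?_⟩
      · rw [← hcard, ← hsplit, hs₂empty]; simp
      · rw [← hsumsplit, htsum0]; simp
  · rintro (⟨s, hcard, hatoms, hsum⟩ | ⟨t, hcard, hatoms, hsum⟩)
    · exact ⟨s, hcard, fun a ha => atomM₀ a (hatoms a ha), hsum⟩
    · refine ⟨t.map (fun b : ℕ => (b : ℚ) / p), by simp [hcard], ?_, ?_⟩
      · intro a ha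
        obtain ⟨b, hb, rfl⟩ := Multiset.mem_map.1 ha
        exact atomN b (hatoms b hb)
      · rw [map_div_sum, hsum]
        field_simp
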